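/- Let M be an imprimitivity Hilbert C*-bimodule over commutative unital C*-algebras A and B, and define φ_M(a) := Σⱼ⟨wⱼ, a·zⱼ⟩_B where Σⱼ⟨wⱼ,zⱼ⟩_B = 1_B. Then φ_M: A → B is a unital *-homomorphism: it is linear, multiplicative, unital, and satisfies φ_M(a*) = φ_M(a)*. -/
import Mathlib


/-- A pre-Hilbert C*-bimodule `M` over unital C*-algebras `A` (on the left) and
`B` (on the right): a left pre-Hilbert C*-module over `A` (inner product `innerL`,
`A`-linear in the first variable) and a right pre-Hilbert C*-module over `B`
(inner product `innerR`, `B`-linear in the second variable), with compatible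
actions. -/
structure PreHilbertBimodule (A B M : Type*) [CStarAlgebra A] [CStarAlgebra B]
    [AddCommGroup M] [Module ℂ M] where
  lsmul : A → M → M
  rsmul : M → B → M
  innerL : M → M → A
  innerR : M → M → B
  lsmul_dist : ∀ a x y, lsmul a (x + y) = lsmul a x + lsmul a y
  add_lsmul : ∀ a b x, lsmul (a + b) x = lsmul a x + lsmul b x
  mul_lsmul : ∀ a b x, lsmul (a * b) x = lsmul a (lsmul b x)
  one_lsmul : ∀ x, lsmul 1 x = x
  lsmul_csmul : ∀ (c : ℂ) a x, lsmul a (c • x) = c • lsmul a x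
  csmul_lsmul : ∀ (c : ℂ) a x, lsmul (c • a) x = c • lsmul a x
  rsmul_dist : ∀ x y b, rsmul (x + y) b = rsmul x b + rsmul y b
  rsmul_add : ∀ x a b, rsmul x (a + b) = rsmul x a + rsmul x b
  rsmul_mul : ∀ x a b, rsmul (rsmul x a) b = rsmul x (a * b)
  rsmul_one : ∀ x, rsmul x 1 = x
  rsmul_csmul : ∀ (c : ℂ) x b, rsmul (c • x) b = c • rsmul x b
  rsmul_calg : ∀ (c : ℂ) x b, rsmul x (c • b) = c • rsmul x b
  lsmul_rsmul : ∀ a x b, lsmul a (rsmul x b) = rsmul (lsmul a x) b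
  innerR_add_right : ∀ x y z, innerR x (y + z) = innerR x y + innerR x z
  innerR_rsmul_right : ∀ x y b, innerR x (rsmul y b) = innerR x y * b
  innerR_conj_symm : ∀ x y, innerR y x = star (innerR x y)
  innerR_csmul_right : ∀ (c : ℂ) x y, innerR x (c • y) = c • innerR x y
  innerR_self_pos : ∀ x, ∃ b, innerR x x = star b * b
  innerR_self_definite : ∀ x, innerR x x = 0 → x = 0
  innerL_add_left : ∀ x y z, innerL (x + y) z = innerL x z + innerL y z
  innerL_lsmul_left : ∀ a x y, innerL (lsmul a x) y = a * innerL x y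
  innerL_conj_symm : ∀ x y, innerL y x = star (innerL x y)
  innerL_csmul_left : ∀ (c : ℂ) x y, innerL (c • x) y = c • innerL x y
  innerL_self_pos : ∀ x, ∃ a, innerL x x = star a * a
  innerL_self_definite : ∀ x, innerL x x = 0 → x = 0
  innerR_lsmul : ∀ a x y, innerR x (lsmul a y) = innerR (lsmul (star a) x) y
  innerL_rsmul : ∀ x y b, innerL (rsmul x b) y = innerL x (rsmul y (star b))

/-- An imprimitivity (equivalence) Hilbert C*-bimodule over `A` and `B`: a
pre-Hilbert C*-bimodule that is full as a left and as a right Hilbert C*-module,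
satisfies the imprimitivity condition `⟨x,y⟩_A·z = x·⟨y,z⟩_B`, and is complete
(for the common norm induced by the inner products). -/
structure ImprimitivityBimodule (A B M : Type*) [CStarAlgebra A] [CStarAlgebra B]
    [AddCommGroup M] [Module ℂ M] extends PreHilbertBimodule A B M where
  imprimitivity : ∀ x y z, lsmul (innerL x y) z = rsmul x (innerR y z)
  fullL : closure (Submodule.span ℂ {a : A | ∃ x y : M, a = innerL x y} : Set A)
      = Set.univ
  fullR : closure (Submodule.span ℂ {b : B | ∃ x y : M, b = innerR x y} : Set B)
      = Set.univ
  complete : ∀ f : ℕ → M,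
    (∀ ε > 0, ∃ N, ∀ m ≥ N, ∀ n ≥ N,
      ‖innerR (f m - f n) (f m - f n)‖ < ε) →
    ∃ x, ∀ ε > 0, ∃ N, ∀ n ≥ N, ‖innerR (f n - x) (f n - x)‖ < ε

/-- For an imprimitivity Hilbert C*-bimodule `M` over commutative unital C*-algebras
`A` and `B`, the canonical map `φ_M(a) := Σⱼ⟨wⱼ, a·zⱼ⟩_B` (for a finite family with
`Σⱼ⟨wⱼ,zⱼ⟩_B = 1`) is a unital *-homomorphism: linear, multiplicative, unital and
involutive. -/
theorem canonical_map_star_hom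
    {A B M : Type*} [CommCStarAlgebra A] [CommCStarAlgebra B]
    [AddCommGroup M] [Module ℂ M]
    (H : ImprimitivityBimodule A B M)
    {n : ℕ} (w z : Fin n → M)
    (hwz : (∑ j, H.innerR (w j) (z j)) = 1)
    (φ : A → B) (hφ : ∀ a, φ a = ∑ j, H.innerR (w j) (H.lsmul a (z j))) :
    (∀ a a' : A, φ (a + a') = φ a + φ a') ∧
    (∀ (c : ℂ) (a : A), φ (c • a) = c • φ a) ∧
    (∀ a a' : A, φ (a * a') = φ a * φ a') ∧
    φ 1 = 1 ∧
    (∀ a : A, φ (star a) = star (φ a)) := by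
  have hrs : ∀ (x : M) (s : Finset (Fin n)) (f : Fin n → B),
      H.rsmul x (∑ j ∈ s, f j) = ∑ j ∈ s, H.rsmul x (f j) := fun x s f =>
    map_sum (AddMonoidHom.mk' (H.rsmul x) (H.rsmul_add x)) f s
  have hls : ∀ (a : A) (s : Finset (Fin n)) (f : Fin n → M),
      H.lsmul a (∑ j ∈ s, f j) = ∑ j ∈ s, H.lsmul a (f j) := fun a s f =>
    map_sum (AddMonoidHom.mk' (H.lsmul a) (H.lsmul_dist a)) f s
  have key : ∀ (a : A) (x : M), H.rsmul x (φ a) = H.lsmul a x := by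
    intro a x
    rw [hφ, hrs]
    have h1 : ∀ j, H.rsmul x (H.innerR (w j) (H.lsmul a (z j)))
        = H.lsmul a (H.rsmul x (H.innerR (w j) (z j))) := by
      intro j
      rw [← H.imprimitivity, ← H.mul_lsmul, mul_comm (H.innerL x (w j)) a,
        H.mul_lsmul, H.imprimitivity]
    simp_rw [h1]
    rw [← hls, ← hrs, hwz, H.rsmul_one]
  refine ⟨?_, ?_, ?_, ?_, ?_⟩
  · intro a a'
    simp_rw [hφ, H.add_lsmul, H.innerR_add_right, Finset.sum_add_distrib]
  · intro c a
    simp_rw [hφ, H.csmul_lsmul, H.innerR_csmul_right, Finset.smul_sum]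
  · intro a a'
    rw [hφ, hφ a]
    have h1 : ∀ j, H.innerR (w j) (H.lsmul (a * a') (z j))
        = H.innerR (w j) (H.lsmul a' (z j)) * φ a := by
      intro j
      rw [mul_comm a a', H.mul_lsmul, ← key a (z j), H.lsmul_rsmul,
        H.innerR_rsmul_right]
    simp_rw [h1, ← Finset.sum_mul, ← hφ]
    exact mul_comm _ _
  · simp_rw [hφ, H.one_lsmul, hwz]
  · intro a
    rw [hφ]
    have h1 : ∀ j, H.innerR (w j) (H.lsmul (star a) (z j))
        = star (φ a) * H.innerR (w j) (z j) := by
      intro j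
      rw [H.innerR_lsmul, star_star, ← key a (w j), H.innerR_conj_symm,
        H.innerR_rsmul_right, star_mul, ← H.innerR_conj_symm]
    simp_rw [h1, ← Finset.mul_sum, hwz, mul_one]
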